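/- With the G₂/P₂ localization sum p(f) := ∑_{k=0}^{5} f(ξ^k(t_1,t_2))/D(ξ^k(t_1,t_2)) where D(t_1,t_2) = (1−t_1)(1−t_2)(1−t_1 t_2)(1−t_1²/t_2)(1−t_2²/t_1) and ξ(t_1,t_2) = (t_2, t_2/t_1), and setting A = 3 − t_1 − 1/t_2 − t_2/t_1, B = 3 − t_2 − 1/t_1 − t_1/t_2: for f = G_{4,4} evaluated at roots (i.e. f(t_1,t_2) = G_{4,4}(γ^*) written in the Grothendieck roots of γ as in the standard formula), p(f) = −A·B. -/

import Mathlib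

/-- The order-6 substitution `ξ(t₁,t₂) = (t₂, t₂/t₁)`. -/
noncomputable def xiG2 (p : ℂ × ℂ) : ℂ × ℂ := (p.2, p.2 / p.1)

/-- The denominator `D(t₁,t₂) = (1-t₁)(1-t₂)(1-t₁t₂)(1-t₁²/t₂)(1-t₂²/t₁)`. -/
noncomputable def DG2 (p : ℂ × ℂ) : ℂ :=
  (1 - p.1) * (1 - p.2) * (1 - p.1 * p.2) * (1 - p.1 ^ 2 / p.2) * (1 - p.2 ^ 2 / p.1)

/-- The quotient formula for the two-variable Grothendieck polynomial `G_{a,b}`. -/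
noncomputable def Gq (a b : ℕ) (u₁ u₂ : ℂ) : ℂ :=
  (1 - u₁⁻¹) ^ (a + 1) * (1 - u₂⁻¹) ^ b / (1 - u₂ / u₁)
    + (1 - u₂⁻¹) ^ (a + 1) * (1 - u₁⁻¹) ^ b / (1 - u₁ / u₂)

/-- With `A = 3 - t₁ - 1/t₂ - t₂/t₁` and `B = 3 - t₂ - 1/t₁ - t₁/t₂`, and
`f(t₁,t₂) = G_{4,4}` evaluated at the Grothendieck roots (i.e. `f p = G_{4,4}(1/p.1, 1/p.2)`),
the G₂/P₂ localization sum `p(f) = ∑_{k=0}^{5} f(ξ^k(t₁,t₂)) / D(ξ^k(t₁,t₂))`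
equals `-A·B`. -/
lemma Gq44 (x y : ℂ) (hx : x ≠ 0) (hy : y ≠ 0) (hxy : x ≠ y) :
    Gq 4 4 x⁻¹ y⁻¹ = (1 - x) ^ 4 * (1 - y) ^ 4 := by
  have h1 : x - y ≠ 0 := sub_ne_zero.mpr hxy
  have h2 : y - x ≠ 0 := sub_ne_zero.mpr (Ne.symm hxy)
  unfold Gq
  rw [inv_inv, inv_inv]
  field_simp
  ring

set_option maxHeartbeats 2000000 in
theorem stmt16 (t₁ t₂ : ℂ) (h₁ : t₁ ≠ 0) (h₂ : t₂ ≠ 0)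
    (hD : ∀ k < 6, DG2 (xiG2^[k] (t₁, t₂)) ≠ 0)
    (hne : ∀ k < 6, (xiG2^[k] (t₁, t₂)).1 ≠ (xiG2^[k] (t₁, t₂)).2) :
    ∑ k ∈ Finset.range 6,
        Gq 4 4 ((xiG2^[k] (t₁, t₂)).1)⁻¹ ((xiG2^[k] (t₁, t₂)).2)⁻¹
          / DG2 (xiG2^[k] (t₁, t₂))
      = -((3 - t₁ - t₂⁻¹ - t₂ / t₁) * (3 - t₂ - t₁⁻¹ - t₁ / t₂)) := by
  have hD0 := hD 0 (by norm_num)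
  have hD1 := hD 1 (by norm_num)
  have hne0 := hne 0 (by norm_num)
  have hne1 := hne 1 (by norm_num)
  have hne2 := hne 2 (by norm_num)
  have hne3 := hne 3 (by norm_num)
  have hne4 := hne 4 (by norm_num)
  have hne5 := hne 5 (by norm_num)
  simp only [Function.iterate_succ, Function.iterate_zero, Function.comp_apply, id_eq,
    xiG2, DG2] at hD0 hD1 hne0 hne1 hne2 hne3 hne4 hne5
  have a1 : (1 : ℂ) - t₁ ≠ 0 := fun h => hD0 (by rw [h]; ring)
  have a2 : (1 : ℂ) - t₂ ≠ 0 := fun h => hD0 (by rw [h]; ring)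
  have a3 : (1 : ℂ) - t₁ * t₂ ≠ 0 := fun h => hD0 (by rw [h]; ring)
  have a4 : (1 : ℂ) - t₁ ^ 2 / t₂ ≠ 0 := fun h => hD0 (by rw [h]; ring)
  have a5 : (1 : ℂ) - t₂ ^ 2 / t₁ ≠ 0 := fun h => hD0 (by rw [h]; ring)
  have b1 : (1 : ℂ) - t₂ / t₁ ≠ 0 := fun h => hD1 (by rw [h]; ring)
  have e3 : t₂ - t₁ ^ 2 ≠ 0 := by
    intro h; apply a4; rw [sub_eq_zero] at h; rw [← h]; field_simp; ring
  have e5 : t₁ - t₂ ^ 2 ≠ 0 := by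
    intro h; apply a5; rw [sub_eq_zero] at h; rw [← h]; field_simp; ring
  have e6 : t₁ - t₂ ≠ 0 := by
    intro h; apply b1; rw [sub_eq_zero] at h; rw [← h]; field_simp; ring
  have e6' : t₂ - t₁ ≠ 0 := fun h => e6 (by linear_combination -h)
  have e3' : t₁ ^ 2 - t₂ ≠ 0 := fun h => e3 (by linear_combination -h)
  have e5' : t₂ ^ 2 - t₁ ≠ 0 := fun h => e5 (by linear_combination -h)
  have f1' : t₁ - 1 ≠ 0 := fun h => a1 (by linear_combination -h)
  have f2' : t₂ - 1 ≠ 0 := fun h => a2 (by linear_combination -h)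
  have f3' : t₁ * t₂ - 1 ≠ 0 := fun h => a3 (by linear_combination -h)
  have m1 : t₂ ≠ t₂ / t₁ := by
    intro h
    rw [eq_div_iff h₁] at h
    have h' : t₂ * t₁ = t₂ * 1 := by linear_combination h
    exact f1' (by linear_combination mul_left_cancel₀ h₂ h')
  have m2 : t₂ / t₁ ≠ 1 / t₁ := by
    intro h
    rw [div_eq_div_iff h₁ h₁] at h
    exact f2' (by linear_combination mul_right_cancel₀ h₁ h)
  have m3 : 1 / t₁ ≠ 1 / t₂ := by
    intro h
    rw [div_eq_div_iff h₁ h₂] at h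
    exact e6 (by linear_combination -h)
  have m4 : 1 / t₂ ≠ t₁ / t₂ := by
    intro h
    rw [div_eq_div_iff h₂ h₂] at h
    exact f1' (by linear_combination -(mul_right_cancel₀ h₂ h))
  have m5 : t₁ / t₂ ≠ t₁ := by
    intro h
    rw [div_eq_iff h₂] at h
    have h' : t₁ * 1 = t₁ * t₂ := by linear_combination h
    exact f2' (by linear_combination -(mul_left_cancel₀ h₁ h'))
  have c1 : t₂ / t₁ / t₂ = 1 / t₁ := by
    rw [div_div, mul_comm, ← div_div, div_self h₂, one_div]
  have c2 : 1 / t₁ / (t₂ / t₁) = 1 / t₂ := by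
    rw [div_div_div_cancel_right₀]
    exact h₁
  have c3 : 1 / t₂ / (1 / t₁) = t₁ / t₂ := by
    field_simp
  have c4 : t₁ / t₂ / (1 / t₂) = t₁ := by
    field_simp
  have n0 : t₂ / t₁ ≠ 0 := div_ne_zero h₂ h₁
  have n1 : (1 : ℂ) / t₁ ≠ 0 := one_div_ne_zero h₁
  have n2 : (1 : ℂ) / t₂ ≠ 0 := one_div_ne_zero h₂
  have n3 : t₁ / t₂ ≠ 0 := div_ne_zero h₁ h₂
  have hD2 := hD 2 (by norm_num)
  have hD3 := hD 3 (by norm_num)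
  have hD4 := hD 4 (by norm_num)
  have hD5 := hD 5 (by norm_num)
  simp only [Function.iterate_succ, Function.iterate_zero, Function.comp_apply, id_eq,
    xiG2, DG2] at hD2 hD3 hD4 hD5
  rw [c1] at hD2 hD3 hD4 hD5
  rw [c2] at hD3 hD4 hD5
  rw [c3] at hD4 hD5
  rw [c4] at hD5
  simp only [Function.iterate_succ, Function.iterate_zero, Function.comp_apply, id_eq,
    xiG2, Finset.sum_range_succ, Finset.sum_range_zero]
  rw [c1, c2, c3, c4]
  rw [Gq44 _ _ h₁ h₂ hne0, Gq44 _ _ h₂ n0 m1, Gq44 _ _ n0 n1 m2,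
    Gq44 _ _ n1 n2 m3, Gq44 _ _ n2 n3 m4, Gq44 _ _ n3 h₁ m5]
  simp only [DG2]
  have hQ : (t₁ ^ 2 * t₂ ^ 3 * (1 - t₁ * t₂) * (t₂ - t₁ ^ 2) * (t₁ - t₂ ^ 2)) ≠ 0 :=
    mul_ne_zero (mul_ne_zero (mul_ne_zero (mul_ne_zero (pow_ne_zero 2 h₁)
      (pow_ne_zero 3 h₂)) a3) e3) e5
  have hT0 : (1 - (t₁)) ^ 4 * (1 - (t₂)) ^ 4 / ((1 - (t₁)) * (1 - (t₂)) * (1 - (t₁) * (t₂)) * (1 - (t₁) ^ 2 / (t₂)) * (1 - (t₂) ^ 2 / (t₁))) = (t₁ ^ 3 * t₂ ^ 4 * (1 - t₁) ^ 3 * (1 - t₂) ^ 3) / (t₁ ^ 2 * t₂ ^ 3 * (1 - t₁ * t₂) * (t₂ - t₁ ^ 2) * (t₁ - t₂ ^ 2)) := by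
    have hB : ((1 - t₁) * (1 - t₂) * (1 - t₁ * t₂) * (t₂ - t₁ ^ 2) * (t₁ - t₂ ^ 2)) ≠ 0 := fun h => (mul_ne_zero (mul_ne_zero (mul_ne_zero (mul_ne_zero (a1) (a2)) (a3)) (e3)) (e5)) (by linear_combination h)
    field_simp
  have hT1 : (1 - (t₂)) ^ 4 * (1 - (t₂ / t₁)) ^ 4 / ((1 - (t₂)) * (1 - (t₂ / t₁)) * (1 - (t₂) * (t₂ / t₁)) * (1 - (t₂) ^ 2 / (t₂ / t₁)) * (1 - (t₂ / t₁) ^ 2 / (t₂))) = (-(t₁ ^ 2 * t₂ ^ 3 * (1 - t₂) ^ 3 * (t₁ - t₂) ^ 3)) / (t₁ ^ 2 * t₂ ^ 3 * (1 - t₁ * t₂) * (t₂ - t₁ ^ 2) * (t₁ - t₂ ^ 2)) := by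
    have hB : (t₁ ^ 4 * ((1 - t₂) * (t₁ - t₂) * (t₁ - t₂ * t₂) * (t₂ - t₂ ^ 2 * t₁) * (t₁ ^ 2 * t₂ - t₂ ^ 2))) ≠ 0 := fun h => (mul_ne_zero (mul_ne_zero (mul_ne_zero (mul_ne_zero (mul_ne_zero (mul_ne_zero (pow_ne_zero 4 h₁) (pow_ne_zero 2 h₂)) (a2)) (e6)) (e5)) (a3)) (e3')) (by linear_combination h)
    field_simp
    ring
  have hT2 : (1 - (t₂ / t₁)) ^ 4 * (1 - (1 / t₁)) ^ 4 / ((1 - (t₂ / t₁)) * (1 - (1 / t₁)) * (1 - (t₂ / t₁) * (1 / t₁)) * (1 - (t₂ / t₁) ^ 2 / (1 / t₁)) * (1 - (1 / t₁) ^ 2 / (t₂ / t₁))) = (t₂ ^ 4 * (t₁ - t₂) ^ 3 * (t₁ - 1) ^ 3) / (t₁ ^ 2 * t₂ ^ 3 * (1 - t₁ * t₂) * (t₂ - t₁ ^ 2) * (t₁ - t₂ ^ 2)) := by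
    have hB : (t₁ ^ 4 * t₁ ^ 4 * ((t₁ - t₂) * (t₁ - 1) * (t₁ * t₁ - t₂) * (t₁ ^ 2 - t₂ ^ 2 * t₁) * (t₁ ^ 2 * t₂ - t₁))) ≠ 0 := fun h => (mul_ne_zero (mul_ne_zero (mul_ne_zero (mul_ne_zero (mul_ne_zero (pow_ne_zero 10 h₁) (e6)) (f1')) (e3')) (e5)) (f3')) (by linear_combination h)
    field_simp
    rw [show t₂ * t₁ - 1 = -(1 - t₂ * t₁) by ring, div_neg]
    ring
  have hT3 : (1 - (1 / t₁)) ^ 4 * (1 - (1 / t₂)) ^ 4 / ((1 - (1 / t₁)) * (1 - (1 / t₂)) * (1 - (1 / t₁) * (1 / t₂)) * (1 - (1 / t₁) ^ 2 / (1 / t₂)) * (1 - (1 / t₂) ^ 2 / (1 / t₁))) = (-(t₁ ^ 2 * t₂ ^ 3 * (t₁ - 1) ^ 3 * (t₂ - 1) ^ 3)) / (t₁ ^ 2 * t₂ ^ 3 * (1 - t₁ * t₂) * (t₂ - t₁ ^ 2) * (t₁ - t₂ ^ 2)) := by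
    have hB : (t₁ ^ 4 * t₂ ^ 4 * ((t₁ - 1) * (t₂ - 1) * (t₁ * t₂ - 1) * (t₁ ^ 2 - t₂) * (t₂ ^ 2 - t₁))) ≠ 0 := fun h => (mul_ne_zero (mul_ne_zero (mul_ne_zero (mul_ne_zero (mul_ne_zero (mul_ne_zero (pow_ne_zero 4 h₁) (pow_ne_zero 4 h₂)) (f1')) (f2')) (f3')) (e3')) (e5')) (by linear_combination h)
    field_simp
    ring
  have hT4 : (1 - (1 / t₂)) ^ 4 * (1 - (t₁ / t₂)) ^ 4 / ((1 - (1 / t₂)) * (1 - (t₁ / t₂)) * (1 - (1 / t₂) * (t₁ / t₂)) * (1 - (1 / t₂) ^ 2 / (t₁ / t₂)) * (1 - (t₁ / t₂) ^ 2 / (1 / t₂))) = (t₁ ^ 3 * t₂ * (t₂ - 1) ^ 3 * (t₂ - t₁) ^ 3) / (t₁ ^ 2 * t₂ ^ 3 * (1 - t₁ * t₂) * (t₂ - t₁ ^ 2) * (t₁ - t₂ ^ 2)) := by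
    have hB : (t₂ ^ 4 * t₂ ^ 4 * ((t₂ - 1) * (t₂ - t₁) * (t₂ * t₂ - t₁) * (t₂ ^ 2 * t₁ - t₂) * (t₂ ^ 2 - t₁ ^ 2 * t₂))) ≠ 0 := fun h => (mul_ne_zero (mul_ne_zero (mul_ne_zero (mul_ne_zero (mul_ne_zero (pow_ne_zero 10 h₂) (f2')) (e6')) (e5')) (f3')) (e3)) (by linear_combination h)
    field_simp
    rw [show t₂ * t₁ - 1 = -(1 - t₂ * t₁) by ring, div_neg]
    ring
  have hT5 : (1 - (t₁ / t₂)) ^ 4 * (1 - (t₁)) ^ 4 / ((1 - (t₁ / t₂)) * (1 - (t₁)) * (1 - (t₁ / t₂) * (t₁)) * (1 - (t₁ / t₂) ^ 2 / (t₁)) * (1 - (t₁) ^ 2 / (t₁ / t₂))) = (-(t₁ ^ 2 * t₂ ^ 3 * (t₂ - t₁) ^ 3 * (1 - t₁) ^ 3)) / (t₁ ^ 2 * t₂ ^ 3 * (1 - t₁ * t₂) * (t₂ - t₁ ^ 2) * (t₁ - t₂ ^ 2)) := by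
    have hB : (t₂ ^ 4 * ((t₂ - t₁) * (1 - t₁) * (t₂ - t₁ * t₁) * (t₂ ^ 2 * t₁ - t₁ ^ 2) * (t₁ - t₁ ^ 2 * t₂))) ≠ 0 := fun h => (mul_ne_zero (mul_ne_zero (mul_ne_zero (mul_ne_zero (mul_ne_zero (mul_ne_zero (pow_ne_zero 4 h₂) (pow_ne_zero 2 h₁)) (e6')) (a1)) (e3)) (e5')) (a3)) (by linear_combination h)
    field_simp
    ring
  rw [hT0, hT1, hT2, hT3, hT4, hT5, zero_add, ← add_div, ← add_div,
    ← add_div, ← add_div, ← add_div, div_eq_iff hQ]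
  field_simp
  ring
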